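/- Let Σ = {a,b}, let k ≥ 1, j = k + 10, w₁ = aʲbʲaʲbʲaʲbʲ and w₂ = aʲb^{j-1}aʲb^{j+1}aʲbʲ. Then w₁ and w₂ have the same length, w₁ ∈ aⁿbⁿΣ* (with n = j > 0) but w₂ ∉ aⁿbⁿΣ*, and the multisets of k-windows (length-k factors, counted with multiplicity, including padded initial windows) of w₁ and w₂ are equal. -/

import Mathlib

/-- The two-letter alphabet `{a, b}`. -/
inductive Sig2 : Type
  | a : Sig2
  | b : Sig2
  deriving DecidableEq

/-- The `k`-window of `x` ending at position `t` (0-indexed, inclusive): the last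
(at most) `k` symbols of the prefix `x₁…x_{t+1}`; near the left edge the window is
shorter (padded). -/
def window (k : ℕ) (x : List Sig2) (t : ℕ) : List Sig2 :=
  (x.take (t + 1)).drop (t + 1 - k)

/-- The multiset of all `k`-windows of `x` (one per position, with multiplicity). -/
def windows (k : ℕ) (x : List Sig2) : Multiset (List Sig2) :=
  ((List.range x.length).map (window k x) : List (List Sig2))

/-- Membership in `aⁿbⁿΣ* = {aⁿbⁿy | n > 0, y ∈ Σ*}`. -/
def InAnbnSigmaStar (x : List Sig2) : Prop :=
  ∃ n : ℕ, 0 < n ∧ ∃ y : List Sig2,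
    x = List.replicate n Sig2.a ++ List.replicate n Sig2.b ++ y

/-- The suffix-attack pair: with `j = k + 10`,
`w₁ = aʲbʲaʲbʲaʲbʲ` and `w₂ = aʲb^{j-1}aʲb^{j+1}aʲbʲ` have the same length,
`w₁ ∈ aⁿbⁿΣ*` (with `n = j > 0`) while `w₂ ∉ aⁿbⁿΣ*`, and their multisets of
`k`-windows coincide. -/
def W1 (k : ℕ) : List Sig2 :=
  List.replicate (k+10) Sig2.a ++ List.replicate (k+10) Sig2.b ++
  List.replicate (k+10) Sig2.a ++ List.replicate (k+10) Sig2.b ++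
  List.replicate (k+10) Sig2.a ++ List.replicate (k+10) Sig2.b

def W2 (k : ℕ) : List Sig2 :=
  List.replicate (k+10) Sig2.a ++ List.replicate (k+9) Sig2.b ++
  List.replicate (k+10) Sig2.a ++ List.replicate (k+11) Sig2.b ++
  List.replicate (k+10) Sig2.a ++ List.replicate (k+10) Sig2.b

def F1 (k n : ℕ) : Sig2 :=
  if n < k+10 then .a else if n < 2*k+20 then .b
  else if n < 3*k+30 then .a else if n < 4*k+40 then .b
  else if n < 5*k+50 then .a else .b

def F2 (k n : ℕ) : Sig2 :=
  if n < k+10 then .a else if n < 2*k+19 then .b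
  else if n < 3*k+29 then .a else if n < 4*k+40 then .b
  else if n < 5*k+50 then .a else .b

def sig (k t : ℕ) : ℕ :=
  if t < 2*k+19 then t
  else if t < 3*k+18 then t + 2*k+21
  else if t < 4*k+39 then t + 1
  else if t < 5*k+39 then t - (2*k+20)
  else t

lemma W1_length (k : ℕ) : (W1 k).length = 6*k+60 := by
  simp [W1]; omega

lemma W2_length (k : ℕ) : (W2 k).length = 6*k+60 := by
  simp [W2]; omega

lemma W1_getElem (k n : ℕ) (h : n < (W1 k).length) : (W1 k)[n] = F1 k n := by
  have h' : n < 6*k+60 := by rw [W1_length k] at h; exact h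
  simp only [W1, F1, List.getElem_append, List.getElem_replicate,
    List.length_replicate, List.length_append]
  split_ifs <;> first | rfl | omega

lemma W2_getElem (k n : ℕ) (h : n < (W2 k).length) : (W2 k)[n] = F2 k n := by
  have h' : n < 6*k+60 := by rw [W2_length k] at h; exact h
  simp only [W2, F2, List.getElem_append, List.getElem_replicate,
    List.length_replicate, List.length_append]
  split_ifs <;> first | rfl | omega

set_option maxHeartbeats 2000000 in
lemma claimC (k : ℕ) (hk : 1 ≤ k) (t : ℕ) (ht : t < 6*k+60) (i : ℕ)
    (hik : i < k) (hit : i < t + 1) :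
    F2 k (t + 1 - k + i) = F1 k (sig k t + 1 - k + i) := by
  unfold sig
  split_ifs with h1 h2 h3 h4 <;>
    · unfold F1 F2
      split_ifs <;> first | rfl | omega

lemma sig_lt (k t : ℕ) (ht : t < 6*k+60) : sig k t < 6*k+60 := by
  unfold sig; split_ifs <;> omega

lemma sig_inj (k : ℕ) (hk : 1 ≤ k) (t t' : ℕ) (ht : t < 6*k+60) (ht' : t' < 6*k+60)
    (h : sig k t = sig k t') : t = t' := by
  unfold sig at h; split_ifs at h <;> omega

lemma window_length (k : ℕ) (x : List Sig2) (t : ℕ) :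
    (window k x t).length = min (t + 1) x.length - (t + 1 - k) := by
  simp [window]

lemma window_eq (k : ℕ) (hk : 1 ≤ k) (t : ℕ) (ht : t < 6*k+60) :
    window k (W2 k) t = window k (W1 k) (sig k t) := by
  have hs := sig_lt k t ht
  apply List.ext_getElem
  · rw [window_length, window_length, W1_length, W2_length]
    unfold sig; split_ifs <;> omega
  · intro i h1 h2
    rw [window_length, W2_length] at h1
    simp only [window]
    rw [List.getElem_drop, List.getElem_take, List.getElem_drop, List.getElem_take,
      W1_getElem, W2_getElem, claimC k hk t ht i (by omega) (by omega)]

lemma windows_W1_W2 (k : ℕ) (hk : 1 ≤ k) : windows k (W1 k) = windows k (W2 k) := by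
  unfold windows
  rw [W1_length, W2_length]
  have h1 : (List.range (6*k+60)).map (window k (W2 k)) =
      ((List.range (6*k+60)).map (sig k)).map (window k (W1 k)) := by
    rw [List.map_map]
    exact List.map_congr_left (fun t htm => window_eq k hk t (List.mem_range.mp htm))
  rw [h1]
  have key : (↑((List.range (6*k+60)).map (sig k)) : Multiset ℕ) =
      ↑(List.range (6*k+60)) := by
    apply Multiset.eq_of_le_of_card_le
    · rw [Multiset.le_iff_subset]
      · intro a ha
        rw [Multiset.mem_coe, List.mem_map] at ha
        obtain ⟨t, htm, rfl⟩ := ha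
        rw [Multiset.mem_coe, List.mem_range]
        exact sig_lt k t (List.mem_range.mp htm)
      · rw [Multiset.coe_nodup]
        exact List.Nodup.map_on
          (fun t htm t' htm' h => sig_inj k hk t t' (List.mem_range.mp htm)
            (List.mem_range.mp htm') h) List.nodup_range
    · simp
  calc (↑((List.range (6*k+60)).map (window k (W1 k))) : Multiset (List Sig2))
      = Multiset.map (window k (W1 k)) ↑(List.range (6*k+60)) := by
        rw [Multiset.map_coe]
    _ = Multiset.map (window k (W1 k)) ↑((List.range (6*k+60)).map (sig k)) := by
        rw [key]
    _ = ↑(((List.range (6*k+60)).map (sig k)).map (window k (W1 k))) := by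
        rw [Multiset.map_coe]

lemma not_in_W2 (k : ℕ) (hk : 1 ≤ k) : ¬ InAnbnSigmaStar (W2 k) := by
  rintro ⟨n, hn, y, hy⟩
  have hlen : 6*k+60 = n + (n + y.length) := by
    have := congrArg List.length hy
    simpa [W2_length] using this
  rcases lt_trichotomy n (k+10) with h | h | h
  · -- index n : LHS = a, RHS = b
    have hm : n < (W2 k).length := by rw [W2_length]; omega
    have e := List.getElem_of_eq hy hm
    rw [W2_getElem k n hm, List.getElem_append] at e
    simp only [List.length_append, List.length_replicate] at e
    rw [dif_pos (by omega), List.getElem_append] at e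
    simp only [List.length_replicate] at e
    rw [dif_neg (by omega), List.getElem_replicate] at e
    simp only [F2] at e
    rw [if_pos (by omega)] at e
    exact Sig2.noConfusion e
  · -- n = k+10 : index 2k+19 : LHS = a, RHS = b
    subst h
    have hm : 2*k+19 < (W2 k).length := by rw [W2_length]; omega
    have e := List.getElem_of_eq hy hm
    rw [W2_getElem k _ hm, List.getElem_append] at e
    simp only [List.length_append, List.length_replicate] at e
    rw [dif_pos (by omega), List.getElem_append] at e
    simp only [List.length_replicate] at e
    rw [dif_neg (by omega), List.getElem_replicate] at e
    simp only [F2] at e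
    rw [if_neg (by omega), if_neg (by omega), if_pos (by omega)] at e
    exact Sig2.noConfusion e
  · -- index k+10 : LHS = b, RHS = a
    have hm : k+10 < (W2 k).length := by rw [W2_length]; omega
    have e := List.getElem_of_eq hy hm
    rw [W2_getElem k _ hm, List.getElem_append] at e
    simp only [List.length_append, List.length_replicate] at e
    rw [dif_pos (by omega), List.getElem_append] at e
    simp only [List.length_replicate] at e
    rw [dif_pos (by omega), List.getElem_replicate] at e
    simp only [F2] at e
    rw [if_neg (by omega), if_pos (by omega)] at e
    exact Sig2.noConfusion e


theorem stmt_13 (k : ℕ) (hk : 1 ≤ k) :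
    let j := k + 10
    let w₁ := List.replicate j Sig2.a ++ List.replicate j Sig2.b ++
              List.replicate j Sig2.a ++ List.replicate j Sig2.b ++
              List.replicate j Sig2.a ++ List.replicate j Sig2.b
    let w₂ := List.replicate j Sig2.a ++ List.replicate (j - 1) Sig2.b ++
              List.replicate j Sig2.a ++ List.replicate (j + 1) Sig2.b ++
              List.replicate j Sig2.a ++ List.replicate j Sig2.b
    w₁.length = w₂.length ∧
    (∃ y : List Sig2, w₁ = List.replicate j Sig2.a ++ List.replicate j Sig2.b ++ y) ∧
    InAnbnSigmaStar w₁ ∧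
    ¬ InAnbnSigmaStar w₂ ∧
    windows k w₁ = windows k w₂ := by
  intro j w₁ w₂
  refine ⟨?_, ?_, ?_, ?_, ?_⟩
  · show (W1 k).length = (W2 k).length
    rw [W1_length, W2_length]
  · show ∃ y : List Sig2, W1 k = List.replicate (k+10) Sig2.a ++
      List.replicate (k+10) Sig2.b ++ y
    exact ⟨List.replicate (k+10) Sig2.a ++ List.replicate (k+10) Sig2.b ++
      List.replicate (k+10) Sig2.a ++ List.replicate (k+10) Sig2.b,
      by simp [W1, List.append_assoc]⟩
  · show InAnbnSigmaStar (W1 k)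
    exact ⟨k+10, by omega, List.replicate (k+10) Sig2.a ++ List.replicate (k+10) Sig2.b ++
      List.replicate (k+10) Sig2.a ++ List.replicate (k+10) Sig2.b,
      by simp [W1, List.append_assoc]⟩
  · show ¬ InAnbnSigmaStar (W2 k)
    exact not_in_W2 k hk
  · show windows k (W1 k) = windows k (W2 k)
    exact windows_W1_W2 k hk
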